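/- arXiv:1810.01752 — 4 statements merged into one kernel-verified Lean document; each statement's English description precedes it below -/
import Mathlib

section
/- Let λ ∈ ℂ and for k ∈ ℤ define a_k = (λ + k + 1)/2 and b_k = (λ - k + 1)/2. Then the following are equivalent: (i) for every even integer k, the complex number a_k · b_{k+2} is a strictly negative real number; (ii) λ is purely imaginary (Re λ = 0), or λ is real with -1 < λ < 1. -/
/-- For `a k = (λ + k + 1)/2`, `b k = (λ - k + 1)/2`, the product
`a k * b (k+2)` is a strictly negative real number for every even integer `k`
iff `λ` is purely imaginary, or `λ` is real with `-1 < λ < 1`. -/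
theorem stmt_1 (lam : ℂ) (a b : ℤ → ℂ)
    (ha : ∀ k : ℤ, a k = (lam + k + 1) / 2)
    (hb : ∀ k : ℤ, b k = (lam - k + 1) / 2) :
    (∀ k : ℤ, Even k → (a k * b (k + 2)).im = 0 ∧ (a k * b (k + 2)).re < 0) ↔
      (lam.re = 0 ∨ (lam.im = 0 ∧ -1 < lam.re ∧ lam.re < 1)) := by
  have key : ∀ k : ℤ, a k * b (k + 2) =
      (lam ^ 2 - ((k : ℂ) + 1) ^ 2) / 4 := by
    intro k
    rw [ha, hb]
    push_cast
    ring
  set x := lam.re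
  set y := lam.im
  have him : ∀ k : ℤ, (a k * b (k + 2)).im = (2 * (x * y)) / 4 := by
    intro k
    rw [key]
    simp [pow_two, Complex.div_im, Complex.mul_im, Complex.mul_re]
    ring
  have hre : ∀ k : ℤ, (a k * b (k + 2)).re =
      (x * x - y * y - ((k : ℝ) + 1) * ((k : ℝ) + 1)) / 4 := by
    intro k
    rw [key]
    simp [pow_two, Complex.div_re, Complex.mul_im, Complex.mul_re]
    rfl
  constructor
  · intro h
    obtain ⟨h1, h2⟩ := h 0 Even.zero
    rw [him] at h1
    rw [hre] at h2
    simp at h1 h2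
    rcases h1 with hx | hy
    · exact Or.inl hx
    · right
      refine ⟨hy, ?_, ?_⟩ <;> nlinarith
  · intro h k hk
    have hk1 : 1 ≤ ((k : ℝ) + 1) * ((k : ℝ) + 1) := by
      have hne : k + 1 ≠ 0 := by
        rintro h0
        rw [show k = -1 by omega] at hk
        exact ((Int.not_odd_iff_even.mpr hk)) (by decide)
      have : (1 : ℤ) ≤ (k + 1) * (k + 1) := by
        rcases (k + 1).lt_or_lt_of_ne hne with h' | h' <;> nlinarith
      have h2 : (1 : ℝ) ≤ ((k : ℝ) + 1) * ((k : ℝ) + 1) := by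
        exact_mod_cast this
      linarith
    rw [him, hre]
    rcases h with hx | ⟨hy, hl, hr⟩
    · constructor
      · rw [hx]; ring
      · nlinarith
    · constructor
      · rw [hy]; ring
      · nlinarith
end

section
/- Let λ ∈ ℂ and for k ∈ ℤ define a_k = (λ + k + 1)/2 and b_k = (λ - k + 1)/2. Then the following are equivalent: (i) for every odd integer k, the complex number a_k · b_{k+2} is a strictly negative real number; (ii) λ is purely imaginary and nonzero (Re λ = 0 and λ ≠ 0). -/
/-- For `a k = (λ + k + 1)/2`, `b k = (λ - k + 1)/2`, the product
`a k * b (k+2)` is a strictly negative real number for every odd integer `k`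
iff `λ` is purely imaginary and nonzero. -/
theorem stmt_2 (lam : ℂ) (a b : ℤ → ℂ)
    (ha : ∀ k : ℤ, a k = (lam + k + 1) / 2)
    (hb : ∀ k : ℤ, b k = (lam - k + 1) / 2) :
    (∀ k : ℤ, Odd k → (a k * b (k + 2)).im = 0 ∧ (a k * b (k + 2)).re < 0) ↔
      (lam.re = 0 ∧ lam ≠ 0) := by
  constructor
  · intro h
    obtain ⟨him, hre⟩ := h (-1) ⟨-1, by ring⟩
    rw [ha, hb] at him hre
    push_cast at him hre
    simp [Complex.div_im, Complex.div_re, Complex.mul_im, Complex.mul_re,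
      Complex.add_im, Complex.add_re, Complex.sub_im, Complex.sub_re] at him hre
    have hy : lam.im ≠ 0 := by nlinarith
    have hx : lam.re = 0 := by
      rcases mul_eq_zero.mp (by nlinarith : lam.re * lam.im = 0) with h' | h'
      · exact h'
      · exact absurd h' hy
    refine ⟨hx, fun h0 => hy (by simp [h0])⟩
  · rintro ⟨hx, h0⟩
    have hy : lam.im ≠ 0 := fun h' => h0 (Complex.ext hx h')
    intro k _
    rw [ha, hb]
    push_cast
    constructor
    · simp [Complex.div_im, Complex.div_re, Complex.mul_im, Complex.mul_re, hx]
      ring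
    · simp [Complex.div_im, Complex.div_re, Complex.mul_im, Complex.mul_re, hx]
      nlinarith [sq_nonneg ((k : ℝ) + 1), mul_self_pos.mpr hy]
end

section
/- Let n ∈ ℕ with n ≥ 1, m ∈ ℤ, and let c_{nm}, b_{n-1,m+3}, a_{nm}, a_{n-1,m+3}, b_{n,m+6}, c_{n+1,m+3}, d_{n+1,m+3}, d_{n,m+6} ∈ ℂ satisfy: (i) (n+1)·a_{nm}·c_{n+1,m+3} = n·c_{nm}·a_{n-1,m+3}; (ii) (n+1)·b_{n,m+6}·d_{n+1,m+3} = n·d_{n,m+6}·b_{n-1,m+3}; (iii) b_{n-1,m+3}·a_{nm} = a_{n-1,m+3}·b_{n,m+6}; (iv) d_{n+1,m+3}·c_{nm} = c_{n+1,m+3}·d_{n,m+6}. Assume moreover a_{n-1,m+3} ≠ 0, d_{n,m+6} ≠ 0, b_{n-1,m+3} ≠ 0 and c_{nm} ≠ 0. Then ((a_{nm}·d_{n+1,m+3})/(a_{n-1,m+3}·d_{n,m+6}))² = n²/(n+1)², and (a_{nm}·d_{n+1,m+3})/(a_{n-1,m+3}·d_{n,m+6}) = (b_{n,m+6}·c_{n+1,m+3})/(b_{n-1,m+3}·c_{nm}).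 -/
/-- From relations (b40), (b45) (at m+6), (b30) and (b35) one obtains
`((a·d')/(a'·d''))² = n²/(n+1)²` and `(a·d')/(a'·d'') = (b''·c')/(b'·c)`.
Here `anm, bnm6, cnm, dnm6` etc. name the coefficients `a_{nm}`, `b_{n,m+6}`,
`c_{nm}`, `d_{n,m+6}`, `a'` = `a_{n-1,m+3}`, `b'` = `b_{n-1,m+3}`,
`c'` = `c_{n+1,m+3}`, `d'` = `d_{n+1,m+3}`. -/
theorem stmt_5 (n : ℕ) (hn : 1 ≤ n) (m : ℤ)
    (anm a' bnm6 b' cnm c' d' dnm6 : ℂ)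
    (h40 : ((n : ℂ) + 1) * anm * c' = (n : ℂ) * cnm * a')
    (h45 : ((n : ℂ) + 1) * bnm6 * d' = (n : ℂ) * dnm6 * b')
    (h30 : b' * anm = a' * bnm6)
    (h35 : d' * cnm = c' * dnm6)
    (ha' : a' ≠ 0) (hd'' : dnm6 ≠ 0) (hb' : b' ≠ 0) (hc : cnm ≠ 0) :
    ((anm * d') / (a' * dnm6)) ^ 2 = (n : ℂ) ^ 2 / ((n : ℂ) + 1) ^ 2 ∧
      (anm * d') / (a' * dnm6) = (bnm6 * c') / (b' * cnm) := by
  have hn1 : ((n : ℂ) + 1) ≠ 0 := by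
    have : ((n + 1 : ℕ) : ℂ) ≠ 0 := Nat.cast_ne_zero.mpr (Nat.succ_ne_zero n)
    push_cast at this; exact this
  have hrs : (anm * d') / (a' * dnm6) = (bnm6 * c') / (b' * cnm) := by
    field_simp
    linear_combination d' * cnm * h30 + a' * bnm6 * h35
  refine ⟨?_, hrs⟩
  rw [sq]
  nth_rewrite 2 [hrs]
  rw [div_mul_div_comm]
  field_simp
  linear_combination ((n : ℂ) + 1) * bnm6 * d' * h40 + (n : ℂ) * cnm * a' * h45
end

section
/- Let c ∈ ℂ and t ∈ ℤ. For integers p, q ≥ -1 define AD(p,q) = ((p+1)/(p+q+2))·(2c - (p+1)t - p(p+2)) and BC(p,q) = ((q+1)/(p+q+2))·(2c + (q+1)t - q(q+2)). Then for all integers p, q ≥ 0, with n = 1 + p + q, one has -AD(p,q) + (1/n)·BC(p,q) + AD(p-1,q) = t + 2p - q. -/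
/-- relation (b25) for the module V(c,2t): with `n = 1 + p + q`,
`-AD(p,q) + (1/n)·BC(p,q) + AD(p-1,q) = t + 2p - q`. -/
theorem stmt_7 (c : ℂ) (t : ℤ) (AD BC : ℤ → ℤ → ℂ)
    (hAD : ∀ p q : ℤ, -1 ≤ p → -1 ≤ q →
      AD p q = (((p : ℂ) + 1) / ((p : ℂ) + q + 2)) *
        (2 * c - ((p : ℂ) + 1) * t - (p : ℂ) * ((p : ℂ) + 2)))
    (hBC : ∀ p q : ℤ, -1 ≤ p → -1 ≤ q →
      BC p q = (((q : ℂ) + 1) / ((p : ℂ) + q + 2)) *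
        (2 * c + ((q : ℂ) + 1) * t - (q : ℂ) * ((q : ℂ) + 2))) :
    ∀ p q : ℤ, 0 ≤ p → 0 ≤ q →
      -AD p q + (1 / (1 + (p : ℂ) + q)) * BC p q + AD (p - 1) q
        = (t : ℂ) + 2 * p - q := by
  intro p q hp hq
  have h1 : ((p : ℂ) + q + 2) ≠ 0 := by
    have : ((p + q + 2 : ℤ) : ℂ) ≠ 0 := by exact_mod_cast (by omega : (p + q + 2 : ℤ) ≠ 0)
    push_cast at this; exact this
  have h2 : ((p : ℂ) - 1 + q + 2) ≠ 0 := by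
    have : ((p - 1 + q + 2 : ℤ) : ℂ) ≠ 0 := by exact_mod_cast (by omega : (p - 1 + q + 2 : ℤ) ≠ 0)
    push_cast at this; exact this
  have h3 : (1 + (p : ℂ) + q) ≠ 0 := by
    have : ((1 + p + q : ℤ) : ℂ) ≠ 0 := by exact_mod_cast (by omega : (1 + p + q : ℤ) ≠ 0)
    push_cast at this; exact this
  rw [hAD p q (by omega) (by omega), hBC p q (by omega) (by omega),
    hAD (p-1) q (by omega) (by omega)]
  push_cast
  field_simp
  ring
end
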